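/- Let D = N(μ, I + Σ) be a Gaussian on R^d with I + Σ positive definite, and set a(X) = μ·X and b(X) = X^T Σ X as polynomials in formal variables X = (X_1,...,X_d). Define h_{m,D}(X) = E_{z~D}[\mathcal{H}_m(z_1 X_1 + ... + z_d X_d, X_1^2 + ... + X_d^2)], where \mathcal{H}_m is the homogenized Hermite polynomial. Then e^{a(X) y + (1/2) b(X) y^2} = \sum_{m=0}^{\infty} (1/m!) h_{m,D}(X) y^m as formal power series in y with coefficients in R[X_1,...,X_d]. -/

import Mathlib

open MeasureTheory Matrix Polynomial
open scoped NNReal ENNReal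

/-- The homogenized Hermite polynomials `𝓗_m(x, y²)`:
`𝓗_0 = 1`, `𝓗_1 = x`, `𝓗_m = x·𝓗_{m-1} - (m-1)·y²·𝓗_{m-2}`. -/
noncomputable def hermiteH : ℕ → ℝ → ℝ → ℝ
  | 0, _, _ => 1
  | 1, x, _ => x
  | (m + 2), x, y2 => x * hermiteH (m + 1) x y2 - ((m : ℝ) + 1) * y2 * hermiteH m x y2

/-- Density of the Gaussian `N(μ, S)` on `ℝ^d`. -/
noncomputable def gaussianPdf (d : ℕ) (μ : Fin d → ℝ) (S : Matrix (Fin d) (Fin d) ℝ)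
    (x : Fin d → ℝ) : ℝ :=
  (Real.sqrt ((2 * Real.pi) ^ d * S.det))⁻¹ *
    Real.exp (-((x - μ) ⬝ᵥ S⁻¹ *ᵥ (x - μ)) / 2)

/-- The Gaussian measure `N(μ, S)` on `ℝ^d`, defined by its density. -/
noncomputable def gaussianMeasure (d : ℕ) (μ : Fin d → ℝ)
    (S : Matrix (Fin d) (Fin d) ℝ) : Measure (Fin d → ℝ) :=
  volume.withDensity fun x => ENNReal.ofReal (gaussianPdf d μ S x)

/-- `h_{m,D}(X) = E_{z∼D}[𝓗_m(z·X, ‖X‖²)]` for `D = N(μ, S)`, evaluated at `X = x`. -/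
noncomputable def hermiteMoment (d : ℕ) (μ : Fin d → ℝ) (S : Matrix (Fin d) (Fin d) ℝ)
    (m : ℕ) (x : Fin d → ℝ) : ℝ :=
  ∫ z, hermiteH m (∑ i, z i * x i) (∑ i, x i ^ 2) ∂(gaussianMeasure d μ S)


noncomputable def hq (a c : ℝ) : ℕ → Polynomial ℂ
  | 0 => 1
  | (n+1) => hq a c n * (C (a:ℂ) - C (c:ℂ) * X) + derivative (hq a c n)

lemma hq_succ (a c : ℝ) (n : ℕ) : hq a c (n+1)
    = hq a c n * (C (a:ℂ) - C (c:ℂ) * X) + derivative (hq a c n) := rfl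

lemma hq_deriv (a c : ℝ) : ∀ n : ℕ, derivative (hq a c (n+1))
    = C (-(((n:ℂ)+1) * (c:ℂ))) * hq a c n := by
  intro n
  induction n with
  | zero =>
      show derivative (1 * (C (a:ℂ) - C (c:ℂ) * X) + derivative 1) = _
      simp [hq]
  | succ n ih =>
      rw [hq_succ a c (n+1), map_add, derivative_mul, ih,
        show derivative (C (a:ℂ) - C (c:ℂ) * X) = - C (c:ℂ) by simp,
        derivative_mul, derivative_C, hq_succ a c n]
      simp only [C_neg, C_mul, C_add, C_1, Nat.cast_add, Nat.cast_one]
      ring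

lemma hq_eval_zero (a c : ℝ) : ∀ m : ℕ, (hq a c m).eval 0 = (hermiteH m a c : ℂ) := by
  intro m
  induction m using Nat.strong_induction_on with
  | _ m ih =>
    match m with
    | 0 => simp [hq, hermiteH]
    | 1 => simp [hq, hermiteH]
    | (m+2) =>
        rw [hq_succ, hq_deriv, Polynomial.eval_add, Polynomial.eval_mul, Polynomial.eval_mul,
          ih (m+1) (by omega), ih m (by omega)]
        rw [show hermiteH (m+2) a c = a * hermiteH (m+1) a c - ((m:ℝ)+1) * c * hermiteH m a c
          from rfl]
        push_cast
        simp
        ring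

lemma hermiteH_genfun (a c y : ℝ) :
    HasSum (fun m : ℕ => (1 / (m.factorial : ℝ)) * hermiteH m a c * y ^ m)
      (Real.exp (a * y - c * y ^ 2 / 2)) := by
  set f : ℂ → ℂ := fun w => Complex.exp ((a:ℂ) * w - (c:ℂ) * w ^ 2 / 2) with hf
  have hdiff : Differentiable ℂ f := by
    apply Differentiable.cexp; fun_prop
  have hderiv : ∀ w : ℂ, HasDerivAt f (((a:ℂ) - (c:ℂ) * w) * f w) w := by
    intro w
    have h1 : HasDerivAt (fun w : ℂ => (a:ℂ) * w - (c:ℂ) * w ^ 2 / 2) ((a:ℂ) - (c:ℂ) * w) w := by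
      have := ((hasDerivAt_id w).const_mul (a:ℂ)).sub
        ((((hasDerivAt_pow 2 w)).const_mul (c:ℂ)).div_const 2)
      exact this.congr_deriv (by ring)
    simpa [hf, mul_comm] using h1.cexp
  have hiter : ∀ n : ℕ, iteratedDeriv n f = fun w => (hq a c n).eval w * f w := by
    intro n
    induction n with
    | zero => funext w; simp [hq, iteratedDeriv_zero]
    | succ n ihn =>
        rw [iteratedDeriv_succ, ihn]
        funext w
        have h2 : HasDerivAt (fun w => (hq a c n).eval w * f w)
            ((hq a c (n+1)).eval w * f w) w := by
          have := ((hq a c n).hasDerivAt w).mul (hderiv w)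
          refine this.congr_deriv ?_
          rw [hq_succ]
          simp
          ring
        exact h2.deriv
  have H := Complex.hasSum_taylorSeries_of_entire hdiff 0 (y : ℂ)
  have hterm : ∀ n : ℕ, ((n.factorial : ℂ))⁻¹ • ((y:ℂ) - 0) ^ n • iteratedDeriv n f 0
      = ((1 / (n.factorial : ℝ) * hermiteH n a c * y ^ n : ℝ) : ℂ) := by
    intro n
    rw [hiter n]
    simp only [sub_zero, smul_eq_mul]
    rw [hq_eval_zero]
    push_cast
    simp [hf]
    ring
  rw [funext hterm] at H
  have hfy : f (y : ℂ) = ((Real.exp (a * y - c * y ^ 2 / 2) : ℝ) : ℂ) := by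
    rw [hf]
    show Complex.exp _ = _
    rw [Complex.ofReal_exp]
    push_cast
    ring_nf
  rw [hfy] at H
  exact Complex.hasSum_ofReal.mp H

lemma hermiteH_bound (a c : ℝ) : ∀ m : ℕ,
    |hermiteH m a c| ≤ hermiteH m |a| (-|c|) ∧ 0 ≤ hermiteH m |a| (-|c|) := by
  intro m
  induction m using Nat.strong_induction_on with
  | _ m ih =>
    match m with
    | 0 => simp [hermiteH]
    | 1 => simp [hermiteH]
    | (m+2) =>
      obtain ⟨h1, h1n⟩ := ih (m+1) (by omega)
      obtain ⟨h0, h0n⟩ := ih m (by omega)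
      have hrec : hermiteH (m+2) a c
          = a * hermiteH (m+1) a c - ((m:ℝ)+1) * c * hermiteH m a c := rfl
      have hrec' : hermiteH (m+2) |a| (-|c|)
          = |a| * hermiteH (m+1) |a| (-|c|) + ((m:ℝ)+1) * |c| * hermiteH m |a| (-|c|) := by
        show |a| * hermiteH (m + 1) |a| (-|c|) - ((m:ℝ) + 1) * (-|c|) * hermiteH m |a| (-|c|) = _
        ring
      constructor
      · rw [hrec, hrec']
        refine le_trans (abs_sub _ _) ?_
        gcongr
        · rw [abs_mul]
          exact mul_le_mul_of_nonneg_left h1 (abs_nonneg a)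
        · rw [abs_mul, abs_mul]
          have : |((m:ℝ)+1)| = (m:ℝ)+1 := abs_of_nonneg (by positivity)
          rw [this]
          exact mul_le_mul_of_nonneg_left h0 (by positivity)
      · rw [hrec']
        have : (0:ℝ) ≤ ((m:ℝ)+1) * |c| * hermiteH m |a| (-|c|) := by positivity
        nlinarith [abs_nonneg a, mul_nonneg (abs_nonneg a) h1n]

lemma hermiteH_continuous (c : ℝ) : ∀ m : ℕ, Continuous (fun a => hermiteH m a c) := by
  intro m
  induction m using Nat.strong_induction_on with
  | _ m ih =>
    match m with
    | 0 => simpa [hermiteH] using continuous_const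
    | 1 => simpa [hermiteH] using continuous_id'
    | (m+2) =>
      have h1 := ih (m+1) (by omega)
      have h0 := ih m (by omega)
      show Continuous fun a => a * hermiteH (m + 1) a c - ((m:ℝ) + 1) * c * hermiteH m a c
      fun_prop

lemma integral_exp_linear_sub_sq_div_two (b : ℝ) :
    ∫ t : ℝ, Real.exp (b * t - t ^ 2 / 2) = Real.sqrt (2 * Real.pi) * Real.exp (b ^ 2 / 2) := by
  have key : ∀ t : ℝ, Real.exp (b * t - t ^ 2 / 2)
      = Real.exp (b ^ 2 / 2) * Real.exp (-(2⁻¹ : ℝ) * (t - b) ^ 2) := by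
    intro t
    rw [← Real.exp_add]
    ring_nf
  rw [funext key, MeasureTheory.integral_const_mul]
  rw [integral_sub_right_eq_self (fun t => Real.exp (-(2⁻¹ : ℝ) * t ^ 2)) b]
  rw [integral_gaussian]
  rw [show Real.pi / 2⁻¹ = 2 * Real.pi by ring]
  ring

lemma integrable_exp_linear_sub_sq_div_two (b : ℝ) :
    Integrable (fun t : ℝ => Real.exp (b * t - t ^ 2 / 2)) := by
  have key : ∀ t : ℝ, Real.exp (b * t - t ^ 2 / 2)
      = Real.exp (b ^ 2 / 2) * Real.exp (-(2⁻¹ : ℝ) * (t - b) ^ 2) := by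
    intro t
    rw [← Real.exp_add]
    ring_nf
  rw [funext key]
  exact ((integrable_exp_neg_mul_sq (by norm_num)).comp_sub_right b).const_mul _

lemma continuous_gaussianPdf (d : ℕ) (μ : Fin d → ℝ) (S : Matrix (Fin d) (Fin d) ℝ) :
    Continuous (gaussianPdf d μ S) := by
  unfold gaussianPdf dotProduct mulVec dotProduct
  fun_prop

open scoped MatrixOrder

section mgf

variable {d : ℕ} (μ : Fin d → ℝ) (S : Matrix (Fin d) (Fin d) ℝ) (hS : S.PosDef)
  (w : Fin d → ℝ)

lemma gaussian_change (hS : S.PosDef) (g : (Fin d → ℝ) → ℝ) (hg : Continuous g) :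
    (Integrable g ↔ Integrable (fun u => g ((CFC.sqrt S) *ᵥ u + μ))) ∧
    (∫ z, g z) = |(CFC.sqrt S).det| *
      ∫ u, g ((CFC.sqrt S) *ᵥ u + μ) := by
  set A := CFC.sqrt S with hA
  have hAA : A * A = S := CFC.sqrt_mul_sqrt_self S hS.posSemidef.nonneg
  have hdet2 : A.det * A.det = S.det := by rw [← det_mul, hAA]
  have hdetA : A.det ≠ 0 := fun h => by
    rw [h, mul_zero] at hdet2; exact hS.det_pos.ne' hdet2.symm
  have hmeas : Measurable (fun u : Fin d → ℝ => A *ᵥ u + μ) := by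
    unfold mulVec dotProduct
    fun_prop
  have hmap : Measure.map (fun u : Fin d → ℝ => A *ᵥ u + μ) volume
      = ENNReal.ofReal |A.det|⁻¹ • volume := by
    have h1 : (fun u : Fin d → ℝ => A *ᵥ u + μ)
        = (fun v : Fin d → ℝ => v + μ) ∘ (Matrix.toLin' A) := by
      funext u; simp [Matrix.toLin'_apply]
    rw [h1, ← Measure.map_map (by fun_prop) (by
      have := Matrix.toLin' A |>.continuous_of_finiteDimensional; fun_prop)]
    rw [Real.map_matrix_volume_pi_eq_smul_volume_pi hdetA, Measure.map_smul,
      map_add_right_eq_self volume μ, abs_inv]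
  have h2 : ∫ z, g z ∂(Measure.map (fun u : Fin d → ℝ => A *ᵥ u + μ) volume)
      = ∫ u, g (A *ᵥ u + μ) := by
    exact integral_map hmeas.aemeasurable hg.aestronglyMeasurable
  constructor
  · have e : Integrable (g ∘ fun u => A *ᵥ u + μ) volume
        ↔ Integrable (fun u => g (A *ᵥ u + μ)) volume := Iff.rfl
    rw [← e, ← integrable_map_measure hg.aestronglyMeasurable hmeas.aemeasurable, hmap,
      integrable_smul_measure (by simp [hdetA]) ENNReal.ofReal_ne_top]
  rw [hmap, integral_smul_measure] at h2
  rw [← h2, ENNReal.toReal_ofReal (by positivity), smul_eq_mul, ← mul_assoc,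
    mul_inv_cancel₀ (by simpa using hdetA), one_mul]

end mgf

lemma gaussian_mgf_aux {d : ℕ} (μ : Fin d → ℝ) (S : Matrix (Fin d) (Fin d) ℝ) (hS : S.PosDef)
    (w : Fin d → ℝ) :
    Integrable (fun z => Real.exp (z ⬝ᵥ w) * gaussianPdf d μ S z) ∧
    (∫ z, Real.exp (z ⬝ᵥ w) * gaussianPdf d μ S z)
      = Real.exp (μ ⬝ᵥ w + w ⬝ᵥ S *ᵥ w / 2) := by
  classical
  set A := CFC.sqrt S with hA
  have hAherm : A.IsHermitian := (Matrix.nonneg_iff_posSemidef.mp (CFC.sqrt_nonneg S)).1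
  have hAt : Aᵀ = A := by
    rw [← Matrix.conjTranspose_eq_transpose_of_trivial]; exact hAherm
  have hSt : Sᵀ = S := by
    rw [← Matrix.conjTranspose_eq_transpose_of_trivial]; exact hS.1
  have hAA : A * A = S := CFC.sqrt_mul_sqrt_self S hS.posSemidef.nonneg
  have hdet2 : A.det * A.det = S.det := by rw [← det_mul, hAA]
  have hdetnn : 0 ≤ A.det := by
    rw [hAherm.det_eq_prod_eigenvalues]
    exact Finset.prod_nonneg fun i _ => (Matrix.nonneg_iff_posSemidef.mp (CFC.sqrt_nonneg S)).eigenvalues_nonneg i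
  have hdetpos : 0 < A.det := by
    rcases hdetnn.lt_or_eq with h | h
    · exact h
    · exfalso; rw [← h, mul_zero] at hdet2; exact hS.det_pos.ne' hdet2.symm
  have hdetA : A.det ≠ 0 := hdetpos.ne'
  have hunit : IsUnit A.det := isUnit_iff_ne_zero.mpr hdetA
  have hASA : A * S⁻¹ * A = 1 := by
    rw [← hAA, Matrix.mul_inv_rev, ← Matrix.mul_assoc,
      Matrix.mul_nonsing_inv _ hunit, Matrix.one_mul, Matrix.nonsing_inv_mul _ hunit]
  have symdot : ∀ v u : Fin d → ℝ, (A *ᵥ u) ⬝ᵥ v = (A *ᵥ v) ⬝ᵥ u := by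
    intro v u
    rw [dotProduct_comm, Matrix.dotProduct_mulVec, ← Matrix.mulVec_transpose, hAt,
      dotProduct_comm]
  have quad : ∀ u : Fin d → ℝ, (A *ᵥ u) ⬝ᵥ (S⁻¹ *ᵥ (A *ᵥ u)) = u ⬝ᵥ u := by
    intro u
    rw [Matrix.mulVec_mulVec, Matrix.dotProduct_mulVec, ← Matrix.mulVec_transpose,
      Matrix.transpose_mul, Matrix.transpose_nonsing_inv, hAt, hSt, Matrix.mulVec_mulVec,
      hASA, Matrix.one_mulVec]
  set cvec := A *ᵥ w with hc
  have h1 : (Real.sqrt (2 * Real.pi) ^ d * A.det) ^ 2 = (2 * Real.pi) ^ d * S.det := by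
    rw [mul_pow, ← pow_mul, mul_comm d 2, pow_mul, Real.sq_sqrt (by positivity), sq, hdet2]
  have hKs : Real.sqrt ((2 * Real.pi) ^ d * S.det) = Real.sqrt (2 * Real.pi) ^ d * A.det := by
    rw [← h1, Real.sqrt_sq (by positivity)]
  have key : ∀ u : Fin d → ℝ, Real.exp ((A *ᵥ u + μ) ⬝ᵥ w) * gaussianPdf d μ S (A *ᵥ u + μ)
      = (Real.exp (μ ⬝ᵥ w) * (Real.sqrt (2 * Real.pi) ^ d * A.det)⁻¹) *
        ∏ i, Real.exp (cvec i * u i - (u i) ^ 2 / 2) := by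
    intro u
    unfold gaussianPdf
    rw [hKs, add_sub_cancel_right, quad, add_dotProduct, symdot w u, ← hc, ← Real.exp_sum]
    simp only [dotProduct]
    have comb : ∀ (K p q m r : ℝ), p + q = m + r →
        Real.exp p * (K * Real.exp q) = Real.exp m * K * Real.exp r := by
      intro K p q m r h
      rw [mul_comm (Real.exp p) _, mul_assoc, ← Real.exp_add, mul_comm (Real.exp m) K,
        mul_assoc, ← Real.exp_add, add_comm q p, h]
    apply comb
    rw [Finset.sum_sub_distrib, ← Finset.sum_div]
    simp only [pow_two]
    ring
  have hcont : Continuous (fun z => Real.exp (z ⬝ᵥ w) * gaussianPdf d μ S z) := by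
    have := continuous_gaussianPdf d μ S
    unfold dotProduct
    fun_prop
  obtain ⟨hiff, hval⟩ := gaussian_change μ S hS (fun z => Real.exp (z ⬝ᵥ w) * gaussianPdf d μ S z)
    hcont
  have hint_comp : Integrable
      (fun u => Real.exp ((A *ᵥ u + μ) ⬝ᵥ w) * gaussianPdf d μ S (A *ᵥ u + μ)) volume := by
    rw [funext key]
    exact (Integrable.fintype_prod
      (fun i => integrable_exp_linear_sub_sq_div_two (cvec i))).const_mul _
  have hIprod : (∫ u : Fin d → ℝ, ∏ i, Real.exp (cvec i * u i - (u i) ^ 2 / 2))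
      = Real.sqrt (2 * Real.pi) ^ d * Real.exp (w ⬝ᵥ S *ᵥ w / 2) := by
    rw [MeasureTheory.integral_fintype_prod_volume_eq_prod (f := fun i t =>
      Real.exp (cvec i * t - t ^ 2 / 2))]
    have : ∀ i, (∫ t : ℝ, Real.exp (cvec i * t - t ^ 2 / 2))
        = Real.sqrt (2 * Real.pi) * Real.exp ((cvec i) ^ 2 / 2) :=
      fun i => integral_exp_linear_sub_sq_div_two (cvec i)
    rw [funext this, Finset.prod_mul_distrib, Finset.prod_const, ← Real.exp_sum,
      ← Finset.sum_div]
    have hsum : (∑ i, (cvec i) ^ 2) = w ⬝ᵥ S *ᵥ w := by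
      have : (∑ i, (cvec i) ^ 2) = cvec ⬝ᵥ cvec := by
        simp only [dotProduct, pow_two]
      rw [this, hc, symdot (A *ᵥ w) w, Matrix.mulVec_mulVec, hAA, dotProduct_comm]
    rw [hsum, Finset.card_univ, Fintype.card_fin]
  refine ⟨hiff.mpr hint_comp, ?_⟩
  rw [hval, funext key, MeasureTheory.integral_const_mul, hIprod, abs_of_pos hdetpos,
    Real.exp_add]
  have hs : Real.sqrt (2 * Real.pi) ^ d ≠ 0 := by positivity
  field_simp

lemma gaussianPdf_nonneg (d : ℕ) (μ : Fin d → ℝ) (S : Matrix (Fin d) (Fin d) ℝ)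
    (x : Fin d → ℝ) : 0 ≤ gaussianPdf d μ S x := by
  unfold gaussianPdf; positivity

lemma integral_gaussianMeasure {d : ℕ} (μ : Fin d → ℝ) (S : Matrix (Fin d) (Fin d) ℝ)
    (g : (Fin d → ℝ) → ℝ) :
    ∫ z, g z ∂(gaussianMeasure d μ S) = ∫ z, g z * gaussianPdf d μ S z := by
  have hd : (fun x => ENNReal.ofReal (gaussianPdf d μ S x))
      = fun x => ((Real.toNNReal (gaussianPdf d μ S x) : ℝ≥0) : ℝ≥0∞) := rfl
  rw [gaussianMeasure, hd, integral_withDensity_eq_integral_smul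
    (continuous_gaussianPdf d μ S).measurable.real_toNNReal]
  congr 1
  funext z
  rw [NNReal.smul_def, Real.coe_toNNReal _ (gaussianPdf_nonneg d μ S z), smul_eq_mul, mul_comm]

lemma integrable_gaussianMeasure {d : ℕ} (μ : Fin d → ℝ) (S : Matrix (Fin d) (Fin d) ℝ)
    (g : (Fin d → ℝ) → ℝ) :
    Integrable g (gaussianMeasure d μ S) ↔ Integrable (fun z => g z * gaussianPdf d μ S z) := by
  rw [gaussianMeasure,
    show (fun x => ENNReal.ofReal (gaussianPdf d μ S x))
      = fun x => ((Real.toNNReal (gaussianPdf d μ S x) : ℝ≥0) : ℝ≥0∞) from rfl,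
    integrable_withDensity_iff_integrable_smul
    (continuous_gaussianPdf d μ S).measurable.real_toNNReal]
  constructor <;> intro h <;> refine h.congr (Filter.Eventually.of_forall fun z => ?_) <;>
    simp only [NNReal.smul_def, Real.coe_toNNReal _ (gaussianPdf_nonneg d μ S z),
      smul_eq_mul] <;> ring

lemma gaussian_mgf {d : ℕ} (μ : Fin d → ℝ) (S : Matrix (Fin d) (Fin d) ℝ) (hS : S.PosDef)
    (w : Fin d → ℝ) :
    Integrable (fun z => Real.exp (z ⬝ᵥ w)) (gaussianMeasure d μ S) ∧
    ∫ z, Real.exp (z ⬝ᵥ w) ∂(gaussianMeasure d μ S)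
      = Real.exp (μ ⬝ᵥ w + w ⬝ᵥ S *ᵥ w / 2) := by
  obtain ⟨hint, hval⟩ := gaussian_mgf_aux μ S hS w
  exact ⟨(integrable_gaussianMeasure μ S _).mpr hint,
    by rw [integral_gaussianMeasure, hval]⟩

/-- For `D = N(μ, I + Σ)` with `I + Σ` positive definite, `a(X) = μ·X`, `b(X) = XᵀΣX`:
`e^{a(X)y + (1/2)b(X)y²} = ∑_{m≥0} (1/m!) h_{m,D}(X) y^m` (as an identity of polynomials
in `X`, stated here at every real point `x` and every `y`). -/
theorem stmt16 (d : ℕ) (μ : Fin d → ℝ) (S : Matrix (Fin d) (Fin d) ℝ)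
    (hpos : ((1 : Matrix (Fin d) (Fin d) ℝ) + S).PosDef)
    (x : Fin d → ℝ) (y : ℝ) :
    HasSum (fun m : ℕ => (1 / (m.factorial : ℝ)) * hermiteMoment d μ (1 + S) m x * y ^ m)
      (Real.exp ((μ ⬝ᵥ x) * y + (x ⬝ᵥ S *ᵥ x) * y ^ 2 / 2)) := by

  classical
  set S' : Matrix (Fin d) (Fin d) ℝ := 1 + S with hS'
  set D := gaussianMeasure d μ S' with hD
  set b : ℝ := ∑ i, x i ^ 2 with hb
  have hbnn : 0 ≤ b := by positivity
  set F : ℕ → (Fin d → ℝ) → ℝ :=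
    fun m z => 1 / (m.factorial : ℝ) * hermiteH m (z ⬝ᵥ x) b * y ^ m with hF
  set T : ℕ → (Fin d → ℝ) → ℝ :=
    fun m z => 1 / (m.factorial : ℝ) * hermiteH m |z ⬝ᵥ x| (-b) * |y| ^ m with hT
  set G : (Fin d → ℝ) → ℝ :=
    fun z => Real.exp (b * y ^ 2 / 2) *
      (Real.exp (z ⬝ᵥ (y • x)) + Real.exp (z ⬝ᵥ ((-y) • x))) with hG
  have hdots : ∀ (t : ℝ) (z : Fin d → ℝ), z ⬝ᵥ (t • x) = t * (z ⬝ᵥ x) := by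
    intro t z; rw [dotProduct_smul, smul_eq_mul]
  have hFz : ∀ z : Fin d → ℝ,
      HasSum (fun m => F m z) (Real.exp ((z ⬝ᵥ x) * y - b * y ^ 2 / 2)) :=
    fun z => hermiteH_genfun (z ⬝ᵥ x) b y
  have hTz : ∀ z : Fin d → ℝ,
      HasSum (fun m => T m z) (Real.exp (|z ⬝ᵥ x| * |y| + b * y ^ 2 / 2)) := by
    intro z
    have := hermiteH_genfun |z ⬝ᵥ x| (-b) |y|
    rw [show |z ⬝ᵥ x| * |y| - -b * |y| ^ 2 / 2 = |z ⬝ᵥ x| * |y| + b * y ^ 2 / 2 by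
      rw [sq_abs]; ring] at this
    exact this
  have hTnn : ∀ (m : ℕ) (z : Fin d → ℝ), 0 ≤ T m z := by
    intro m z
    have h := (hermiteH_bound (z ⬝ᵥ x) b m).2
    rw [abs_of_nonneg hbnn] at h
    rw [hT]
    exact mul_nonneg (mul_nonneg (by positivity) h) (by positivity)
  have hFT : ∀ (m : ℕ) (z : Fin d → ℝ), |F m z| ≤ T m z := by
    intro m z
    have h := (hermiteH_bound (z ⬝ᵥ x) b m).1
    rw [abs_of_nonneg hbnn] at h
    have heq : |F m z| = 1 / (m.factorial : ℝ) * |hermiteH m (z ⬝ᵥ x) b| * |y| ^ m := by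
      rw [hF]
      simp only [abs_mul, abs_pow]
      rw [abs_of_nonneg (show (0:ℝ) ≤ 1 / (m.factorial : ℝ) by positivity)]
    rw [heq, hT]
    exact mul_le_mul_of_nonneg_right
      (mul_le_mul_of_nonneg_left h (by positivity)) (by positivity)
  have hexpG : ∀ z : Fin d → ℝ,
      Real.exp (|z ⬝ᵥ x| * |y| + b * y ^ 2 / 2) ≤ G z := by
    intro z
    rw [Real.exp_add, mul_comm, hG]
    show _ * _ ≤ Real.exp (b * y ^ 2 / 2) *
      (Real.exp (z ⬝ᵥ (y • x)) + Real.exp (z ⬝ᵥ ((-y) • x)))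
    rw [hdots, hdots]
    gcongr
    have habs : |z ⬝ᵥ x| * |y| = |y * (z ⬝ᵥ x)| := by rw [abs_mul]; ring
    rw [habs, neg_mul]
    rcases abs_cases (y * (z ⬝ᵥ x)) with ⟨h, _⟩ | ⟨h, _⟩
    · rw [h]
      linarith [Real.exp_pos (-(y * (z ⬝ᵥ x)))]
    · rw [h]
      linarith [Real.exp_pos (y * (z ⬝ᵥ x))]
  have hTG : ∀ (m : ℕ) (z : Fin d → ℝ), T m z ≤ G z := by
    intro m z
    exact le_trans (le_hasSum (hTz z) m (fun n _ => hTnn n z)) (hexpG z)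
  have hGint : Integrable G D :=
    (((gaussian_mgf μ S' hpos (y • x)).1.add (gaussian_mgf μ S' hpos ((-y) • x)).1).const_mul _)
  have hdotcont : Continuous fun z : Fin d → ℝ => z ⬝ᵥ x := by
    unfold dotProduct; fun_prop
  have hFcont : ∀ m : ℕ, Continuous (F m) := by
    intro m
    have := (hermiteH_continuous b m).comp hdotcont
    rw [hF]; fun_prop
  have hTcont : ∀ m : ℕ, Continuous (T m) := by
    intro m
    have := (hermiteH_continuous (-b) m).comp (continuous_abs.comp hdotcont)
    rw [hT]; fun_prop
  have hFint : ∀ m : ℕ, Integrable (F m) D := by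
    intro m
    refine hGint.mono (hFcont m).aestronglyMeasurable
      (Filter.Eventually.of_forall fun z => ?_)
    rw [Real.norm_eq_abs, Real.norm_eq_abs]
    exact le_trans ((hFT m z).trans (hTG m z)) (le_abs_self _)
  have hTint : ∀ m : ℕ, Integrable (T m) D := by
    intro m
    refine hGint.mono (hTcont m).aestronglyMeasurable
      (Filter.Eventually.of_forall fun z => ?_)
    rw [Real.norm_eq_abs, Real.norm_eq_abs, abs_of_nonneg (hTnn m z)]
    exact (hTG m z).trans (le_abs_self _)
  have hu_sum : Summable fun m => ∫ z, T m z ∂D := by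
    refine summable_of_sum_range_le (c := ∫ z, G z ∂D)
      (fun m => integral_nonneg (hTnn m)) (fun n => ?_)
    rw [← integral_finset_sum _ (fun m _ => hTint m)]
    refine integral_mono (integrable_finset_sum _ (fun m _ => hTint m)) hGint fun z => ?_
    calc ∑ m ∈ Finset.range n, T m z
        ≤ Real.exp (|z ⬝ᵥ x| * |y| + b * y ^ 2 / 2) :=
          sum_le_hasSum _ (fun m _ => hTnn m z) (hTz z)
      _ ≤ G z := hexpG z
  have hnorm_sum : Summable fun m => ∫ z, ‖F m z‖ ∂D := by
    refine hu_sum.of_nonneg_of_le (fun m => integral_nonneg fun z => norm_nonneg _)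
      (fun m => integral_mono (hFint m).norm (hTint m) fun z => ?_)
    rw [Real.norm_eq_abs]; exact hFT m z
  have H := hasSum_integral_of_summable_integral_norm hFint hnorm_sum
  have htsum : ∀ z : Fin d → ℝ, (∑' m, F m z) = Real.exp ((z ⬝ᵥ x) * y - b * y ^ 2 / 2) :=
    fun z => (hFz z).tsum_eq
  rw [funext htsum] at H
  have hsplit : (fun z : Fin d → ℝ => Real.exp ((z ⬝ᵥ x) * y - b * y ^ 2 / 2))
      = fun z => Real.exp (-(b * y ^ 2 / 2)) * Real.exp (z ⬝ᵥ (y • x)) := by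
    funext z
    rw [← Real.exp_add, hdots]
    ring_nf
  rw [hsplit, MeasureTheory.integral_const_mul, (gaussian_mgf μ S' hpos (y • x)).2] at H
  have hval : Real.exp (-(b * y ^ 2 / 2)) *
      Real.exp (μ ⬝ᵥ (y • x) + (y • x) ⬝ᵥ S' *ᵥ (y • x) / 2)
      = Real.exp ((μ ⬝ᵥ x) * y + (x ⬝ᵥ S *ᵥ x) * y ^ 2 / 2) := by
    rw [← Real.exp_add]
    congr 1
    rw [hdots, Matrix.mulVec_smul, dotProduct_smul, smul_dotProduct, smul_eq_mul, smul_eq_mul,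
      hS', Matrix.add_mulVec, Matrix.one_mulVec, dotProduct_add]
    have hxx : x ⬝ᵥ x = b := by
      rw [hb]; simp only [dotProduct, pow_two]
    rw [hxx]
    ring
  rw [hval] at H
  have hfun : (fun m : ℕ => 1 / (m.factorial : ℝ) * hermiteMoment d μ (1 + S) m x * y ^ m)
      = fun m => ∫ z, F m z ∂D := by
    funext m
    rw [hermiteMoment, hF]
    have : ∀ z : Fin d → ℝ,
        1 / (m.factorial : ℝ) * hermiteH m (z ⬝ᵥ x) b * y ^ m
        = (1 / (m.factorial : ℝ) * y ^ m) *
          hermiteH m (∑ i, z i * x i) (∑ i, x i ^ 2) := by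
      intro z
      rw [show z ⬝ᵥ x = ∑ i, z i * x i from rfl, ← hb]
      ring
    simp only [this]
    rw [MeasureTheory.integral_const_mul]
    rw [hD, hS']
    ring
  rw [hfun]
  exact H
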